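/- Fix W₀ ∈ V_s and W ∈ V_s with d_q(W, W₀) = j. The number of t-dimensional subspaces U of W with ℓ_q(U, W₀) = k equals [s−j choose t−k]_q · [j choose k]_q · q^{((s−j)−(t−k))·k}. -/

import Mathlib

open Module

set_option maxHeartbeats 1600000
set_option synthInstance.maxHeartbeats 400000

/-- The `q`-factorial `a!_q = ∏_{k=1}^a (q^k - 1)/(q - 1)`. -/
noncomputable def qFact (q : ℚ) (a : ℕ) : ℚ := ∏ k ∈ Finset.range a, (q ^ (k + 1) - 1) / (q - 1)

/-- The Gaussian binomial coefficient `[a choose b]_q = a!_q / (b!_q (a-b)!_q)`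
(and `0` when `b > a`). -/
noncomputable def qChoose (q : ℚ) (a b : ℕ) : ℚ :=
  if b ≤ a then qFact q a / (qFact q b * qFact q (a - b)) else 0

lemma qFact_ne_zero {q : ℚ} (hq : 1 < q) (a : ℕ) : qFact q a ≠ 0 := by
  unfold qFact
  apply Finset.prod_ne_zero_iff.2
  intro k _
  apply div_ne_zero
  · have : 1 < q ^ (k+1) := one_lt_pow₀ hq (Nat.succ_ne_zero k)
    linarith
  · linarith

lemma prod_sub_pow (q : ℚ) (a b : ℕ) (hba : b ≤ a) :
    ∏ i ∈ Finset.range b, (q ^ a - q ^ i)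
      = (∏ i ∈ Finset.range b, q ^ i) * ∏ i ∈ Finset.range b, (q ^ (a - b + i + 1) - 1) := by
  have step1 : ∏ i ∈ Finset.range b, (q ^ a - q ^ i)
      = ∏ i ∈ Finset.range b, (q ^ i * (q ^ (a - i) - 1)) := by
    apply Finset.prod_congr rfl
    intro i hi
    rw [Finset.mem_range] at hi
    have : i + (a - i) = a := by omega
    rw [mul_sub, ← pow_add, this, mul_one]
  rw [step1, Finset.prod_mul_distrib]
  congr 1
  rw [← Finset.prod_range_reflect (fun i => q ^ (a - b + i + 1) - 1) b]
  apply Finset.prod_congr rfl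
  intro i hi
  rw [Finset.mem_range] at hi
  have : a - b + (b - 1 - i) + 1 = a - i := by omega
  rw [this]

lemma qChoose_mul_eq (q : ℚ) (hq : 1 < q) (a b : ℕ) (hba : b ≤ a) :
    qChoose q a b * ∏ i ∈ Finset.range b, (q ^ b - q ^ i)
      = ∏ i ∈ Finset.range b, (q ^ a - q ^ i) := by
  have hq1 : q - 1 ≠ 0 := by intro h; apply absurd hq; simp [sub_eq_zero] at h; simp [h]
  have hfa : qFact q a = qFact q (a - b) * ∏ i ∈ Finset.range b, ((q ^ (a - b + i + 1) - 1) / (q - 1)) := by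
    unfold qFact
    rw [← Finset.prod_range_add (fun k => (q ^ (k + 1) - 1) / (q - 1)) (a - b) b,
      Nat.sub_add_cancel hba]
  rw [prod_sub_pow q a b hba, prod_sub_pow q b b le_rfl]
  have hbb : qFact q b = ∏ i ∈ Finset.range b, ((q ^ (b - b + i + 1) - 1) / (q - 1)) := by
    unfold qFact; apply Finset.prod_congr rfl; intro i _; rw [Nat.sub_self, Nat.zero_add]
  rw [qChoose, if_pos hba, hfa, hbb]
  rw [Finset.prod_div_distrib, Finset.prod_div_distrib]
  have hne : ∀ c : ℕ, (∏ i ∈ Finset.range b, (q ^ (c + i + 1) - 1)) ≠ 0 := by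
    intro c
    apply Finset.prod_ne_zero_iff.2
    intro i _
    have : 1 < q ^ (c + i + 1) := one_lt_pow₀ hq (Nat.succ_ne_zero _)
    linarith
  have h1 := hne (a - b)
  have h2 : (∏ i ∈ Finset.range b, (q ^ (i + 1) - 1)) ≠ 0 := by
    apply Finset.prod_ne_zero_iff.2
    intro i _
    have : 1 < q ^ (i + 1) := one_lt_pow₀ hq (Nat.succ_ne_zero _)
    linarith
  have h3 := qFact_ne_zero hq (a - b)
  have h4 : (q - 1) ^ b ≠ 0 := pow_ne_zero _ hq1
  have h5 : (∏ i ∈ Finset.range b, (q ^ (b - b + i + 1) - 1)) ≠ 0 := hne (b - b)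
  field_simp


lemma nat_card_sigma' {ι : Type*} [Fintype ι] (f : ι → Type*) [∀ i, Finite (f i)] :
    Nat.card (Σ i, f i) = ∑ i : ι, Nat.card (f i) := by
  letI : ∀ i, Fintype (f i) := fun i => Fintype.ofFinite _
  simp [Nat.card_eq_fintype_card, Fintype.card_sigma]


lemma card_li_mod {F V : Type*} [Field F] [Fintype F] [AddCommGroup V] [Module F V] [Finite V]
    (Y : Submodule F V) (k : ℕ) (hk : k ≤ finrank F V - finrank F Y) :
    Nat.card {b : Fin k → V // LinearIndependent F (Y.mkQ ∘ b)} =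
      Nat.card Y ^ k * ∏ i ∈ Finset.range k,
        (Fintype.card F ^ (finrank F V - finrank F Y) - Fintype.card F ^ i) := by
  haveI : Finite (V ⧸ Y) := Finite.of_surjective _ Y.mkQ_surjective
  haveI : Module.Finite F V := Module.Finite.of_finite
  have hQ : finrank F (V ⧸ Y) = finrank F V - finrank F Y := by
    have := Submodule.finrank_quotient_add_finrank Y
    omega
  obtain ⟨σ, hσ⟩ := Y.mkQ.exists_rightInverse_of_surjective
    (by rw [Submodule.range_mkQ])
  have hσ' : ∀ x, Y.mkQ (σ x) = x := fun x => LinearMap.ext_iff.mp hσ x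
  let E : {b : Fin k → V // LinearIndependent F (Y.mkQ ∘ b)} ≃
      {c : Fin k → V ⧸ Y // LinearIndependent F c} × (Fin k → Y) :=
    { toFun := fun b => (⟨Y.mkQ ∘ b.1, b.2⟩, fun i =>
        ⟨b.1 i - σ (Y.mkQ (b.1 i)), by
          rw [← Submodule.Quotient.mk_eq_zero Y, ← Submodule.mkQ_apply, map_sub, hσ', sub_self]⟩)
      invFun := fun p => ⟨fun i => σ (p.1.1 i) + (p.2 i : V), by
        have he : Y.mkQ ∘ (fun i => σ (p.1.1 i) + (p.2 i : V)) = p.1.1 := by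
          funext i
          have h0 : Y.mkQ (p.2 i : V) = 0 := by
            rw [Submodule.mkQ_apply, Submodule.Quotient.mk_eq_zero]; exact (p.2 i).2
          simp [← Submodule.mkQ_apply, hσ', h0, map_zero]
        rw [he]; exact p.1.2⟩
      left_inv := fun b => Subtype.ext (funext fun i => by simp)
      right_inv := fun p => by
        refine Prod.ext (Subtype.ext (funext fun i => ?_)) (funext fun i => Subtype.ext ?_)
        · have h0 : Y.mkQ (p.2 i : V) = 0 := by
            rw [Submodule.mkQ_apply, Submodule.Quotient.mk_eq_zero]; exact (p.2 i).2
          simp [← Submodule.mkQ_apply, hσ', h0, map_zero]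
        · have h0 : Y.mkQ (p.2 i : V) = 0 := by
            rw [Submodule.mkQ_apply, Submodule.Quotient.mk_eq_zero]; exact (p.2 i).2
          simp [← Submodule.mkQ_apply, hσ', h0, map_zero] }
  rw [Nat.card_congr E, Nat.card_prod, Nat.card_fun, Nat.card_eq_fintype_card (α := Fin k),
    Fintype.card_fin, card_linearIndependent (K := F) (by rw [hQ]; exact hk), hQ, mul_comm]
  congr 1
  exact Fin.prod_univ_eq_prod_range (fun i => Fintype.card F ^ (finrank F V - finrank F ↥Y) - Fintype.card F ^ i) k


section SpanDims

variable {F V : Type*} [Field F] [AddCommGroup V] [Module F V] [FiniteDimensional F V]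

lemma span_union_dims (X : Submodule F V) {m k : ℕ} (a : Fin m → V) (b : Fin k → V)
    (ha : LinearIndependent F a) (haX : ∀ i, a i ∈ X)
    (hb : LinearIndependent F (X.mkQ ∘ b)) :
    finrank F (Submodule.span F (Set.range a ∪ Set.range b)) = m + k ∧
    finrank F ↥(Submodule.span F (Set.range a ∪ Set.range b) ⊓ X) = m := by
  classical
  set P := Submodule.span F (Set.range a ∪ Set.range b) with hP
  -- upper bound on finrank P
  have hsup : P = Submodule.span F (Set.range a) ⊔ Submodule.span F (Set.range b) :=
    Submodule.span_union _ _
  have hfa : finrank F (Submodule.span F (Set.range a)) = m := by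
    rw [finrank_span_eq_card ha, Fintype.card_fin]
  have hb' : LinearIndependent F b := hb.of_comp X.mkQ
  have hfb : finrank F (Submodule.span F (Set.range b)) = k := by
    rw [finrank_span_eq_card hb', Fintype.card_fin]
  have hPle : finrank F P ≤ m + k := by
    have := Submodule.finrank_sup_add_finrank_inf_eq
      (Submodule.span F (Set.range a)) (Submodule.span F (Set.range b))
    rw [hfa, hfb] at this
    rw [hsup]
    omega
  -- rank-nullity for mkQ restricted to P
  have key : finrank F ↥(P.map X.mkQ) + finrank F ↥(P ⊓ X) = finrank F P := by
    have h1 := LinearMap.finrank_range_add_finrank_ker (X.mkQ ∘ₗ P.subtype)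
    have hker : LinearMap.ker (X.mkQ ∘ₗ P.subtype) = Submodule.comap P.subtype (P ⊓ X) := by
      rw [LinearMap.ker_comp, Submodule.ker_mkQ]
      ext x
      simp [Submodule.mem_comap, x.2]
    have hrange : LinearMap.range (X.mkQ ∘ₗ P.subtype) = P.map X.mkQ := by
      rw [LinearMap.range_comp, Submodule.range_subtype]
    have hkerrank : finrank F ↥(LinearMap.ker (X.mkQ ∘ₗ P.subtype)) = finrank F ↥(P ⊓ X) := by
      rw [hker]
      exact (Submodule.comapSubtypeEquivOfLe (inf_le_left : P ⊓ X ≤ P)).finrank_eq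
    rw [hrange, hkerrank] at h1
    exact h1
  -- compute the image
  have himg : P.map X.mkQ = Submodule.span F (Set.range (X.mkQ ∘ b)) := by
    rw [hP, Submodule.map_span, Set.image_union, ← Set.range_comp, ← Set.range_comp,
      Submodule.span_union]
    have hz : Set.range (⇑X.mkQ ∘ a) ⊆ {0} := by
      rintro x ⟨i, rfl⟩
      simp [Function.comp, Submodule.Quotient.mk_eq_zero, haX i]
    have : Submodule.span F (Set.range (⇑X.mkQ ∘ a)) = ⊥ := by
      rw [← Submodule.span_empty (R := F)]
      apply le_antisymm
      · exact le_trans (Submodule.span_mono hz) (by simp)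
      · exact Submodule.span_mono (Set.empty_subset _)
    rw [this, bot_sup_eq]
  have himgrank : finrank F ↥(P.map X.mkQ) = k := by
    rw [himg, finrank_span_eq_card hb, Fintype.card_fin]
  -- lower bound on finrank (P ⊓ X)
  have hlow : m ≤ finrank F ↥(P ⊓ X) := by
    have hle : Submodule.span F (Set.range a) ≤ P ⊓ X := by
      rw [le_inf_iff]
      constructor
      · exact Submodule.span_mono Set.subset_union_left
      · rw [Submodule.span_le]
        rintro x ⟨i, rfl⟩
        exact haX i
    calc m = finrank F (Submodule.span F (Set.range a)) := hfa.symm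
    _ ≤ finrank F ↥(P ⊓ X) := Submodule.finrank_mono hle
  rw [himgrank] at key
  constructor <;> omega

end SpanDims

lemma main_count {F V : Type*} [Field F] [Fintype F] [AddCommGroup V] [Module F V] [Finite V]
    (X : Submodule F V) (m k : ℕ)
    (hm : m ≤ finrank F X) (hk : k ≤ finrank F V - finrank F X) :
    Nat.card {U : Submodule F V // finrank F U = m + k ∧ finrank F ↥(U ⊓ X) = m} *
      ((∏ i ∈ Finset.range m, (Fintype.card F ^ m - Fintype.card F ^ i)) *
        Fintype.card F ^ (m * k) *
        ∏ i ∈ Finset.range k, (Fintype.card F ^ k - Fintype.card F ^ i)) =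
    (∏ i ∈ Finset.range m, (Fintype.card F ^ finrank F X - Fintype.card F ^ i)) *
      Fintype.card F ^ (finrank F X * k) *
      ∏ i ∈ Finset.range k, (Fintype.card F ^ (finrank F V - finrank F X) - Fintype.card F ^ i) := by
  classical
  haveI : Module.Finite F V := Module.Finite.of_finite
  haveI : Finite (Submodule F V) :=
    Finite.of_injective (fun U => (U : Set V)) SetLike.coe_injective
  set q := Fintype.card F with hq
  set l := finrank F X with hl
  set s := finrank F V with hs
  -- the total space
  set T := ({a : Fin m → X // LinearIndependent F a} ×
    {b : Fin k → V // LinearIndependent F (X.mkQ ∘ b)}) with hT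
  set S := {U : Submodule F V // finrank F U = m + k ∧ finrank F ↥(U ⊓ X) = m} with hS
  -- linear independence of coerced a
  have hacoe : ∀ (a : Fin m → X), LinearIndependent F a →
      LinearIndependent F (fun i => (a i : V)) := by
    intro a ha
    exact ha.map' X.subtype X.ker_subtype
  -- the fibration map
  have hwell : ∀ p : T, finrank F (Submodule.span F
        (Set.range (fun i => (p.1.1 i : V)) ∪ Set.range p.2.1)) = m + k ∧
      finrank F ↥(Submodule.span F
        (Set.range (fun i => (p.1.1 i : V)) ∪ Set.range p.2.1) ⊓ X) = m := by
    intro p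
    exact span_union_dims X _ _ (hacoe p.1.1 p.1.2) (fun i => (p.1.1 i).2) p.2.2
  set Φ : T → S := fun p => ⟨Submodule.span F
      (Set.range (fun i => (p.1.1 i : V)) ∪ Set.range p.2.1), hwell p⟩ with hΦ
  -- total count
  have htot : Nat.card T = (∏ i ∈ Finset.range m, (q ^ l - q ^ i)) * q ^ (l * k) *
      ∏ i ∈ Finset.range k, (q ^ (s - l) - q ^ i) := by
    rw [Nat.card_prod]
    have h1 : Nat.card {a : Fin m → X // LinearIndependent F a} =
        ∏ i ∈ Finset.range m, (q ^ l - q ^ i) := by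
      rw [card_linearIndependent (K := F) (V := X) (by rw [← hl]; exact hm)]
      exact Fin.prod_univ_eq_prod_range (fun i => q ^ l - q ^ i) m
    have h2 : Nat.card X = q ^ l := by
      letI : Fintype X := Fintype.ofFinite _
      rw [Nat.card_eq_fintype_card, card_eq_pow_finrank (K := F) (V := X), hl]
    rw [h1, card_li_mod X k hk, h2, ← pow_mul]
    ring
  -- the fiber count
  have hfib : ∀ U : S, Nat.card {p : T // Φ p = U} =
      (∏ i ∈ Finset.range m, (q ^ m - q ^ i)) * q ^ (m * k) *
        ∏ i ∈ Finset.range k, (q ^ k - q ^ i) := by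
    rintro ⟨U₀, hU1, hU2⟩
    set Y : Submodule F U₀ := X.comap U₀.subtype with hY
    have hYeq : Y = Submodule.comap U₀.subtype (U₀ ⊓ X) := by
      ext x; simp [hY, Submodule.mem_comap, x.2]
    have hYrank : finrank F Y = m := by
      rw [hYeq, (Submodule.comapSubtypeEquivOfLe (inf_le_left : U₀ ⊓ X ≤ U₀)).finrank_eq, hU2]
    set ι : (U₀ ⧸ Y) →ₗ[F] V ⧸ X := Submodule.mapQ Y X U₀.subtype le_rfl with hι
    have hιker : LinearMap.ker ι = ⊥ := by
      apply Submodule.ker_liftQ_eq_bot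
      rw [LinearMap.ker_comp, Submodule.ker_mkQ]
    have hιmk : ∀ u : U₀, ι (Y.mkQ u) = X.mkQ (u : V) := by
      intro u; rfl
    -- the fiber equivalence
    have hmemU : ∀ (p : T), Φ p = ⟨U₀, hU1, hU2⟩ →
        (∀ i, (p.1.1 i : V) ∈ U₀) ∧ (∀ i, p.2.1 i ∈ U₀) := by
      intro p hp
      have hp' : Submodule.span F
          (Set.range (fun i => (p.1.1 i : V)) ∪ Set.range p.2.1) = U₀ :=
        congrArg Subtype.val hp
      constructor
      · intro i
        rw [← hp']
        exact Submodule.subset_span (Or.inl ⟨i, rfl⟩)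
      · intro i
        rw [← hp']
        exact Submodule.subset_span (Or.inr ⟨i, rfl⟩)
    let E : {p : T // Φ p = ⟨U₀, hU1, hU2⟩} ≃
        ({a : Fin m → ↥(U₀ ⊓ X) // LinearIndependent F a} ×
          {b : Fin k → U₀ // LinearIndependent F (Y.mkQ ∘ b)}) :=
      { toFun := fun p =>
          (⟨fun i => ⟨(p.1.1.1 i : V), (hmemU p.1 p.2).1 i, (p.1.1.1 i).2⟩, by
            apply LinearIndependent.of_comp (U₀ ⊓ X).subtype
            exact hacoe p.1.1.1 p.1.1.2⟩,
          ⟨fun i => ⟨p.1.2.1 i, (hmemU p.1 p.2).2 i⟩, by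
            apply LinearIndependent.of_comp ι
            exact p.1.2.2⟩)
        invFun := fun ab => ⟨⟨⟨fun i => ⟨(ab.1.1 i : V), (ab.1.1 i).2.2⟩, by
            apply LinearIndependent.of_comp X.subtype
            exact ab.1.2.map' (U₀ ⊓ X).subtype (U₀ ⊓ X).ker_subtype⟩,
          ⟨fun i => (ab.2.1 i : V), by
            show LinearIndependent F (X.mkQ ∘ fun i => ((ab.2.1 i : U₀) : V))
            exact ab.2.2.map' ι hιker⟩⟩, by
          apply Subtype.ext
          show Submodule.span F _ = U₀
          have hle : Submodule.span F
              (Set.range (fun i => ((ab.1.1 i : V))) ∪ Set.range (fun i => ((ab.2.1 i : U₀) : V)))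
              ≤ U₀ := by
            rw [Submodule.span_le]
            rintro x (⟨i, rfl⟩ | ⟨i, rfl⟩)
            · exact (ab.1.1 i).2.1
            · exact (ab.2.1 i).2
          have hrk := span_union_dims X (fun i => ((ab.1.1 i : V)))
            (fun i => ((ab.2.1 i : U₀) : V))
            (show LinearIndependent F fun i => ((ab.1.1 i : V)) from
              ab.1.2.map' (U₀ ⊓ X).subtype (U₀ ⊓ X).ker_subtype)
            (fun i => (ab.1.1 i).2.2)
            (by
              show LinearIndependent F (X.mkQ ∘ fun i => ((ab.2.1 i : U₀) : V))
              exact ab.2.2.map' ι hιker)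
          exact Submodule.eq_of_le_of_finrank_le hle (by rw [hU1, hrk.1])⟩
        left_inv := fun p => by
          apply Subtype.ext
          refine Prod.ext (Subtype.ext (funext fun i => Subtype.ext rfl))
            (Subtype.ext (funext fun i => rfl))
        right_inv := fun ab => by
          refine Prod.ext (Subtype.ext (funext fun i => Subtype.ext rfl))
            (Subtype.ext (funext fun i => Subtype.ext rfl)) }
    rw [Nat.card_congr E, Nat.card_prod]
    have hUrank : finrank F U₀ = m + k := hU1
    have h1 : Nat.card {a : Fin m → ↥(U₀ ⊓ X) // LinearIndependent F a} =
        ∏ i ∈ Finset.range m, (q ^ m - q ^ i) := by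
      rw [card_linearIndependent (K := F) (V := ↥(U₀ ⊓ X)) (by rw [hU2])]
      rw [hU2]
      exact Fin.prod_univ_eq_prod_range (fun i => q ^ m - q ^ i) m
    have h2 : Nat.card Y = q ^ m := by
      letI : Fintype Y := Fintype.ofFinite _
      rw [Nat.card_eq_fintype_card, card_eq_pow_finrank (K := F) (V := Y), hYrank]
    have h3 : finrank F U₀ - finrank F Y = k := by
      rw [hYrank, hUrank]; omega
    rw [h1, card_li_mod Y k (by rw [h3]), h2, h3, ← pow_mul]
    ring
  -- put it together
  have hsum : Nat.card T = Nat.card S *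
      ((∏ i ∈ Finset.range m, (q ^ m - q ^ i)) * q ^ (m * k) *
        ∏ i ∈ Finset.range k, (q ^ k - q ^ i)) := by
    cases nonempty_fintype S
    rw [← Nat.card_congr (Equiv.sigmaFiberEquiv Φ), nat_card_sigma']
    rw [Finset.sum_congr rfl (fun U _ => hfib U), Finset.sum_const, Finset.card_univ,
      Nat.card_eq_fintype_card, smul_eq_mul]
  rw [← hsum]
  exact htot



lemma cast_prod_sub (q : ℕ) (hq : 1 ≤ q) (c b : ℕ) (hbc : b ≤ c) :
    ((∏ i ∈ Finset.range b, (q ^ c - q ^ i) : ℕ) : ℚ) =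
      ∏ i ∈ Finset.range b, ((q : ℚ) ^ c - (q : ℚ) ^ i) := by
  rw [Nat.cast_prod]
  apply Finset.prod_congr rfl
  intro i hi
  rw [Finset.mem_range] at hi
  have : q ^ i ≤ q ^ c := Nat.pow_le_pow_right hq (by omega)
  push_cast [Nat.cast_sub this]
  ring

lemma prod_pow_sub_pos (q : ℕ) (hq : 2 ≤ q) (b : ℕ) :
    (0 : ℚ) < ∏ i ∈ Finset.range b, ((q : ℚ) ^ b - (q : ℚ) ^ i) := by
  apply Finset.prod_pos
  intro i hi
  rw [Finset.mem_range] at hi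
  have h1 : (q : ℚ) ^ i < (q : ℚ) ^ b := by
    apply pow_lt_pow_right₀ (by exact_mod_cast hq) hi
  linarith


theorem stmt15 (q n s t j k : ℕ) (F : Type) [Field F] [Fintype F] (hF : Fintype.card F = q)
    (hs : s ≤ n) (hts : t ≤ s) (hkt : k ≤ t) (hj : j ≤ s)
    (W₀ W : Submodule F (Fin n → F)) (hW₀ : finrank F W₀ = s) (hW : finrank F W = s)
    (hd : finrank F W - finrank F ↥(W ⊓ W₀) = j) :
    (Nat.card {U : Submodule F (Fin n → F) //
        U ≤ W ∧ finrank F U = t ∧ finrank F U - finrank F ↥(U ⊓ W₀) = k} : ℚ) =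
      qChoose q (s - j) (t - k) * qChoose q j k * (q : ℚ) ^ (((s - j) - (t - k)) * k) := by
  classical
  subst hF
  set q := Fintype.card F with hq
  have hq2 : 2 ≤ q := Fintype.one_lt_card
  set X : Submodule F ↥W := W₀.comap W.subtype with hX
  have hWW₀ : finrank F ↥(W ⊓ W₀) = s - j := by
    have h1 : finrank F ↥(W ⊓ W₀) ≤ s := by
      rw [← hW]; exact Submodule.finrank_mono inf_le_left
    omega
  have hXrank : finrank F ↥X = s - j := by
    have hXeq : X = Submodule.comap W.subtype (W ⊓ W₀) := by
      ext x; simp [hX, Submodule.mem_comap, x.2]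
    rw [hXeq, (Submodule.comapSubtypeEquivOfLe (inf_le_left : W ⊓ W₀ ≤ W)).finrank_eq, hWW₀]
  -- transfer to subspaces of W
  have hinf : ∀ U' : Submodule F ↥W,
      finrank F ↥(Submodule.map W.subtype U' ⊓ W₀) = finrank F ↥(U' ⊓ X) := by
    intro U'
    have h1 : Submodule.map W.subtype (U' ⊓ X) = Submodule.map W.subtype U' ⊓ W₀ := by
      rw [Submodule.map_inf _ W.injective_subtype, hX, Submodule.map_comap_subtype,
        ← inf_assoc, inf_eq_left.mpr (Submodule.map_subtype_le W U')]
    rw [← h1, Submodule.finrank_map_subtype_eq]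
  have hequiv : Nat.card {U : Submodule F (Fin n → F) //
        U ≤ W ∧ finrank F U = t ∧ finrank F U - finrank F ↥(U ⊓ W₀) = k} =
      Nat.card {U' : Submodule F ↥W //
        finrank F U' = t ∧ finrank F ↥(U' ⊓ X) = t - k} := by
    apply Nat.card_congr
    have h : ∀ U' : Submodule F ↥W,
        (finrank F U' = t ∧ finrank F ↥(U' ⊓ X) = t - k) ↔
        (finrank F ((Submodule.MapSubtype.orderIso W) U' : Submodule F (Fin n → F)) = t ∧
          finrank F ((Submodule.MapSubtype.orderIso W) U' : Submodule F (Fin n → F)) -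
            finrank F ↥(((Submodule.MapSubtype.orderIso W) U' : Submodule F (Fin n → F)) ⊓ W₀)
              = k) := by
      intro U'
      have e1 : ((Submodule.MapSubtype.orderIso W) U' : Submodule F (Fin n → F)) =
          Submodule.map W.subtype U' := rfl
      rw [e1, Submodule.finrank_map_subtype_eq, hinf]
      have hle : finrank F ↥(U' ⊓ X) ≤ finrank F U' :=
        Submodule.finrank_mono inf_le_left
      constructor
      · rintro ⟨h1, h2⟩; exact ⟨h1, by omega⟩
      · rintro ⟨h1, h2⟩; exact ⟨h1, by omega⟩
    exact ((Equiv.subtypeSubtypeEquivSubtypeInter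
        (fun U : Submodule F (Fin n → F) => U ≤ W)
        (fun U => finrank F U = t ∧ finrank F U - finrank F ↥(U ⊓ W₀) = k)).symm.trans
      (Equiv.subtypeEquiv (q := fun x : {U : Submodule F (Fin n → F) // U ≤ W} =>
        finrank F x.1 = t ∧ finrank F x.1 - finrank F ↥(x.1 ⊓ W₀) = k)
        (Submodule.MapSubtype.orderIso W).toEquiv h).symm)
  rw [hequiv]
  by_cases hcase : t - k ≤ s - j ∧ k ≤ j
  · -- main case
    obtain ⟨hc1, hc2⟩ := hcase
    set m := t - k with hm
    have htm : t = m + k := by omega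
    have hcount := main_count X m k (by rw [hXrank]; exact hc1) (by rw [hXrank, hW]; omega)
    rw [hXrank, hW] at hcount
    have hsj : s - (s - j) = j := by omega
    rw [hsj] at hcount
    rw [← htm] at hcount
    -- cast to ℚ
    have hq1 : (1 : ℚ) < q := by exact_mod_cast hq2
    have hcast : (Nat.card {U' : Submodule F ↥W //
          finrank F U' = t ∧ finrank F ↥(U' ⊓ X) = m} : ℚ) *
        ((∏ i ∈ Finset.range m, ((q:ℚ) ^ m - (q:ℚ) ^ i)) * (q:ℚ) ^ (m * k) *
          ∏ i ∈ Finset.range k, ((q:ℚ) ^ k - (q:ℚ) ^ i)) =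
        (∏ i ∈ Finset.range m, ((q:ℚ) ^ (s-j) - (q:ℚ) ^ i)) * (q:ℚ) ^ ((s-j) * k) *
          ∏ i ∈ Finset.range k, ((q:ℚ) ^ j - (q:ℚ) ^ i) := by
      rw [← cast_prod_sub q (by omega) m m le_rfl, ← cast_prod_sub q (by omega) k k le_rfl,
        ← cast_prod_sub q (by omega) (s - j) m hc1, ← cast_prod_sub q (by omega) j k hc2]
      push_cast
      exact_mod_cast hcount
    have hC : ((∏ i ∈ Finset.range m, ((q:ℚ) ^ m - (q:ℚ) ^ i)) * (q:ℚ) ^ (m * k) *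
        ∏ i ∈ Finset.range k, ((q:ℚ) ^ k - (q:ℚ) ^ i)) ≠ 0 := by
      have h1 := prod_pow_sub_pos q hq2 m
      have h2 := prod_pow_sub_pos q hq2 k
      have h3 : (0:ℚ) < (q:ℚ) ^ (m * k) := by positivity
      positivity
    apply mul_right_cancel₀ hC
    rw [hcast]
    rw [mul_comm (qChoose _ (s-j) m * qChoose _ j k) ((q:ℚ) ^ ((s - j - m) * k))]
    calc (∏ i ∈ Finset.range m, ((q:ℚ) ^ (s-j) - (q:ℚ) ^ i)) * (q:ℚ) ^ ((s-j) * k) *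
          ∏ i ∈ Finset.range k, ((q:ℚ) ^ j - (q:ℚ) ^ i)
        = (qChoose q (s-j) m * ∏ i ∈ Finset.range m, ((q:ℚ) ^ m - (q:ℚ) ^ i)) *
            (q:ℚ) ^ ((s-j) * k) *
            (qChoose q j k * ∏ i ∈ Finset.range k, ((q:ℚ) ^ k - (q:ℚ) ^ i)) := by
          rw [qChoose_mul_eq (q:ℚ) hq1 (s-j) m hc1, qChoose_mul_eq (q:ℚ) hq1 j k hc2]
      _ = (q:ℚ) ^ ((s - j - m) * k) * (qChoose q (s-j) m * qChoose q j k) *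
            ((∏ i ∈ Finset.range m, ((q:ℚ) ^ m - (q:ℚ) ^ i)) * (q:ℚ) ^ (m * k) *
              ∏ i ∈ Finset.range k, ((q:ℚ) ^ k - (q:ℚ) ^ i)) := by
          have hexp : (s-j) * k = (s - j - m) * k + m * k := by
            rw [← Nat.add_mul]; congr 1; omega
          rw [hexp, pow_add]
          ring
  · -- degenerate case: both sides are zero
    have hzero : Nat.card {U' : Submodule F ↥W //
        finrank F U' = t ∧ finrank F ↥(U' ⊓ X) = t - k} = 0 := by
      rw [Nat.card_eq_zero]
      left
      constructor
      rintro ⟨U', hU't, hU'X⟩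
      have h1 : finrank F ↥(U' ⊓ X) ≤ s - j := by
        rw [← hXrank]; exact Submodule.finrank_mono inf_le_right
      have h2 : finrank F ↥(U' ⊔ X) + finrank F ↥(U' ⊓ X) = t + (s - j) := by
        rw [Submodule.finrank_sup_add_finrank_inf_eq, hU't, hXrank]
      have h3 : finrank F ↥(U' ⊔ X) ≤ s := hW ▸ Submodule.finrank_le _
      omega
    rw [hzero]
    have : qChoose (q:ℚ) (s - j) (t - k) * qChoose (q:ℚ) j k = 0 := by
      rcases not_and_or.mp hcase with h | h
      · simp [qChoose, h]
      · simp [qChoose, h]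
    rw [Nat.cast_zero, this, zero_mul]
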